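/- There is an absolute constant c > 0 such that the following holds for every ε ∈ (0,1]. Let k be even, γ ∈ (0,1/2], and let W : [k] → Δ({0,1}^k) be the k-RAPPOR channel with privacy parameter ε. For a distribution p on [k], let W(p)^{⊗n} denote the law of n i.i.d. RAPPOR outputs, each obtained by drawing a sample from p and applying W. Suppose there is a test A : ({0,1}^k)^n → {0,1} such that A outputs 0 with probability at least 2/3 under W(u)^{⊗n} (u the uniform distribution on [k]), and A outputs 1 with probability at least 2/3 under W(p_θ)^{⊗n} for every θ ∈ {−1,+1}^{k/2}, where p_θ is the Paninski perturbation. Then n ≥ c·k^{3/2}/(γ²ε²). -/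

import Mathlib

open Finset

/-- The Paninski perturbation of the uniform distribution on `[k]` (`k` even):
indexing `[k]` by `{0, …, k−1}`, the pair `(2i, 2i+1)` gets masses
`(1 ± 2θ_i γ)/k` according to the sign `θ_i ∈ {−1, +1}`. -/
noncomputable def paninski (k : ℕ) (γ : ℝ) (θ : ℕ → ℝ) (x : Fin k) : ℝ :=
  (1 + (if x.val % 2 = 0 then 1 else -1) * 2 * θ (x.val / 2) * γ) / k

/-- The `k`-RAPPOR channel with privacy parameter `ε`: the probability that input
`x ∈ [k]` produces the bit-vector `b ∈ {0,1}^k` (one-hot encode `x`, then flip every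
bit independently with probability `1/(e^{ε/2}+1)`). -/
noncomputable def rapporChannel (ε : ℝ) {k : ℕ} (x : Fin k) (b : Fin k → Bool) : ℝ :=
  ∏ j : Fin k,
    (if b j
      then (if j = x then Real.exp (ε / 2) / (Real.exp (ε / 2) + 1)
            else 1 / (Real.exp (ε / 2) + 1))
      else (if j = x then 1 / (Real.exp (ε / 2) + 1)
            else Real.exp (ε / 2) / (Real.exp (ε / 2) + 1)))

namespace RUT

variable {k : ℕ}

noncomputable def Rr (ε : ℝ) : ℝ := Real.exp (ε / 2)

lemma Rr_pos (ε : ℝ) : 0 < Rr ε := Real.exp_pos _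

lemma one_le_Rr {ε : ℝ} (hε : 0 ≤ ε) : 1 ≤ Rr ε := by
  unfold Rr; rw [show (1:ℝ) = Real.exp 0 by simp]
  exact Real.exp_le_exp.2 (by linarith)

noncomputable def CC (ε : ℝ) (b : Fin k → Bool) : ℝ :=
  ∏ j, (if b j then 1 / (Rr ε + 1) else Rr ε / (Rr ε + 1))

noncomputable def eb (b : Fin k → Bool) (x : Fin k) : ℝ := if b x then 1 else 0

noncomputable def mm (b : Fin k → Bool) : ℝ := ∑ x, eb b x

noncomputable def DD (ε : ℝ) (b : Fin k → Bool) : ℝ :=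
  (Rr ε)⁻¹ + (Rr ε - (Rr ε)⁻¹) * (mm b / k)

lemma CC_pos (ε : ℝ) (b : Fin k → Bool) : 0 < CC ε b := by
  apply Finset.prod_pos
  intro j _
  have := Rr_pos ε
  split <;> positivity

lemma eb_nonneg (b : Fin k → Bool) (x : Fin k) : 0 ≤ eb b x := by
  unfold eb; split <;> norm_num

lemma mm_nonneg (b : Fin k → Bool) : 0 ≤ mm b :=
  Finset.sum_nonneg fun x _ => eb_nonneg b x

lemma DD_ge {ε : ℝ} (hε : 0 ≤ ε) (b : Fin k → Bool) : (Rr ε)⁻¹ ≤ DD ε b := by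
  unfold DD
  have h1 := one_le_Rr hε
  have h0 := Rr_pos ε
  have hinv : (Rr ε)⁻¹ ≤ 1 := by
    rw [inv_le_one_iff₀]; right; exact h1
  have hsub : 0 ≤ Rr ε - (Rr ε)⁻¹ := by linarith
  have hmk : 0 ≤ mm b / (k:ℝ) := by
    apply div_nonneg (mm_nonneg b) (Nat.cast_nonneg k)
  nlinarith

lemma DD_pos {ε : ℝ} (hε : 0 ≤ ε) (b : Fin k → Bool) : 0 < DD ε b :=
  lt_of_lt_of_le (inv_pos.2 (Rr_pos ε)) (DD_ge hε b)

lemma inv_DD_le {ε : ℝ} (hε : 0 ≤ ε) (b : Fin k → Bool) : (DD ε b)⁻¹ ≤ Rr ε := by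
  have h := DD_ge hε b
  have h0 := Rr_pos ε
  calc (DD ε b)⁻¹ ≤ ((Rr ε)⁻¹)⁻¹ := by
        apply inv_anti₀ (inv_pos.2 h0) h
    _ = Rr ε := inv_inv _

lemma channel_eq (ε : ℝ) (x : Fin k) (b : Fin k → Bool) :
    rapporChannel ε x b = CC ε b * (if b x then Rr ε else (Rr ε)⁻¹) := by
  unfold rapporChannel CC Rr
  have hx : (if b x then Real.exp (ε/2) else (Real.exp (ε/2))⁻¹)
      = ∏ j : Fin k, (if j = x then (if b x then Real.exp (ε/2) else (Real.exp (ε/2))⁻¹) else 1) := by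
    rw [Finset.prod_ite_eq']; simp
  rw [hx, ← Finset.prod_mul_distrib]
  apply Finset.prod_congr rfl
  intro j _
  have hR := Real.exp_pos (ε/2)
  by_cases hj : j = x
  · subst hj
    cases hbx : b j <;> simp [hbx] <;> field_simp
  · simp [hj]

lemma mix_eq (ε : ℝ) (p : Fin k → ℝ) (b : Fin k → Bool) :
    ∑ x, p x * rapporChannel ε x b
      = CC ε b * ((Rr ε)⁻¹ * ∑ x, p x + (Rr ε - (Rr ε)⁻¹) * ∑ x, p x * eb b x) := by
  have h : ∀ x : Fin k, p x * rapporChannel ε x b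
      = CC ε b * ((Rr ε)⁻¹ * p x + (Rr ε - (Rr ε)⁻¹) * (p x * eb b x)) := by
    intro x; rw [channel_eq]; unfold eb
    cases hbx : b x <;> simp [hbx] <;> ring
  rw [Finset.sum_congr rfl (fun x _ => h x), ← Finset.mul_sum]
  congr 1
  rw [Finset.sum_add_distrib, ← Finset.mul_sum, ← Finset.mul_sum]

lemma sum_pi_bool_prod {ι : Type*} [Fintype ι] [DecidableEq ι] (f : ι → Bool → ℝ) :
    ∑ b : ι → Bool, ∏ j, f j (b j) = ∏ j, (f j true + f j false) := by
  calc ∑ b : ι → Bool, ∏ j, f j (b j)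
      = ∑ b ∈ Fintype.piFinset (fun _ : ι => (univ : Finset Bool)), ∏ j, f j (b j) := by
        rw [Fintype.piFinset_univ]
    _ = ∏ j, ∑ y : Bool, f j y := (Finset.prod_univ_sum _ _).symm
    _ = ∏ j, (f j true + f j false) := by
        apply Finset.prod_congr rfl; intro j _; simp

lemma sum_pi_prod {n : ℕ} {X : Type*} [Fintype X] [DecidableEq X] (f : X → ℝ) :
    ∑ B : Fin n → X, ∏ i, f (B i) = (∑ x, f x) ^ n := by
  calc ∑ B : Fin n → X, ∏ i, f (B i)
      = ∑ B ∈ Fintype.piFinset (fun _ : Fin n => (univ : Finset X)), ∏ i, f (B i) := by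
        rw [Fintype.piFinset_univ]
    _ = ∏ _i : Fin n, ∑ x, f x := (Finset.prod_univ_sum _ _).symm
    _ = (∑ x, f x) ^ n := by rw [Finset.prod_const, Finset.card_univ, Fintype.card_fin]

lemma sum_channel (ε : ℝ) (x : Fin k) : ∑ b : Fin k → Bool, rapporChannel ε x b = 1 := by
  unfold rapporChannel
  rw [sum_pi_bool_prod (fun j t => if t
      then (if j = x then Real.exp (ε / 2) / (Real.exp (ε / 2) + 1) else 1 / (Real.exp (ε / 2) + 1))
      else (if j = x then 1 / (Real.exp (ε / 2) + 1) else Real.exp (ε / 2) / (Real.exp (ε / 2) + 1)))]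
  apply Finset.prod_eq_one
  intro j _
  have h : Real.exp (ε/2) + 1 ≠ 0 := by positivity
  by_cases hj : j = x <;> simp [hj] <;> field_simp <;> ring

lemma sum_CC (ε : ℝ) : ∑ b : Fin k → Bool, CC ε b = 1 := by
  unfold CC
  rw [sum_pi_bool_prod (fun _ t => if t then 1 / (Rr ε + 1) else Rr ε / (Rr ε + 1))]
  apply Finset.prod_eq_one
  intro j _
  have h0 := Rr_pos ε
  have h : Rr ε + 1 ≠ 0 := by positivity
  simp; field_simp; ring

lemma rappor_nonneg (ε : ℝ) (x : Fin k) (b : Fin k → Bool) : 0 ≤ rapporChannel ε x b := by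
  apply Finset.prod_nonneg
  intro j _
  have := Real.exp_pos (ε/2)
  split <;> split <;> positivity

lemma comp_sum_perm {α : Type*} [Fintype α] [DecidableEq α] (π : Equiv.Perm α)
    (F : (α → Bool) → ℝ) : ∑ b : α → Bool, F (b ∘ π) = ∑ b : α → Bool, F b := by
  have := Equiv.sum_comp (Equiv.arrowCongr π.symm (Equiv.refl Bool)) F
  simpa [Equiv.arrowCongr, Function.comp] using this

lemma exists_perm_pair {x y x' y' : Fin k} (hxy : x ≠ y) (h' : x' ≠ y') :
    ∃ π : Equiv.Perm (Fin k), π x = x' ∧ π y = y' := by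
  classical
  refine ⟨(Equiv.swap x x').trans (Equiv.swap ((Equiv.swap x x') y) y'), ?_, ?_⟩
  · simp only [Equiv.trans_apply, Equiv.swap_apply_left]
    apply Equiv.swap_apply_of_ne_of_ne
    · intro h
      apply hxy
      have := congrArg (Equiv.swap x x') h
      rw [Equiv.swap_apply_right, Equiv.swap_apply_self] at this
      exact this
    · exact h'
  · simp only [Equiv.trans_apply, Equiv.swap_apply_left]

lemma sum_range_pair (m : ℕ) (f : ℕ → ℝ) :
    ∑ x ∈ Finset.range (2*m), f x = ∑ i ∈ Finset.range m, (f (2*i) + f (2*i+1)) := by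
  induction m with
  | zero => simp
  | succ m ih =>
    rw [show 2*(m+1) = 2*m+1+1 by ring, Finset.sum_range_succ, Finset.sum_range_succ,
      Finset.sum_range_succ, ih]
    ring

lemma CC_comp (ε : ℝ) (π : Equiv.Perm (Fin k)) (b : Fin k → Bool) :
    CC ε (b ∘ π) = CC ε b := by
  unfold CC
  exact Equiv.prod_comp π (fun j => if b j then 1 / (Rr ε + 1) else Rr ε / (Rr ε + 1))

lemma mm_comp (π : Equiv.Perm (Fin k)) (b : Fin k → Bool) : mm (b ∘ π) = mm b := by
  unfold mm eb
  exact Equiv.sum_comp π (fun j => if b j then (1:ℝ) else 0)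

lemma DD_comp (ε : ℝ) (π : Equiv.Perm (Fin k)) (b : Fin k → Bool) :
    DD ε (b ∘ π) = DD ε b := by
  unfold DD; rw [mm_comp]

noncomputable def JJ (ε : ℝ) (x y : Fin k) : ℝ :=
  ∑ b : Fin k → Bool, CC ε b * eb b x * eb b y / DD ε b

noncomputable def KK (ε : ℝ) (x : Fin k) : ℝ := ∑ b : Fin k → Bool, CC ε b * eb b x

lemma JJ_perm (ε : ℝ) (π : Equiv.Perm (Fin k)) (x y : Fin k) :
    JJ ε (π x) (π y) = JJ ε x y := by
  unfold JJ
  rw [← comp_sum_perm π.symm (fun b => CC ε b * eb b (π x) * eb b (π y) / DD ε b)]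
  apply Finset.sum_congr rfl
  intro b _
  rw [CC_comp, DD_comp]
  have hx : eb (b ∘ π.symm) (π x) = eb b x := by simp [eb]
  have hy : eb (b ∘ π.symm) (π y) = eb b y := by simp [eb]
  rw [hx, hy]

lemma KK_perm (ε : ℝ) (π : Equiv.Perm (Fin k)) (x : Fin k) : KK ε (π x) = KK ε x := by
  unfold KK
  rw [← comp_sum_perm π.symm (fun b => CC ε b * eb b (π x))]
  apply Finset.sum_congr rfl
  intro b _
  rw [CC_comp]
  have hx : eb (b ∘ π.symm) (π x) = eb b x := by simp [eb]
  rw [hx]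

lemma KK_const (ε : ℝ) (x y : Fin k) : KK ε x = KK ε y := by
  have := KK_perm ε (Equiv.swap x y) y
  rwa [Equiv.swap_apply_right] at this

lemma JJ_diag_eq (ε : ℝ) (x y : Fin k) : JJ ε x x = JJ ε y y := by
  have := JJ_perm ε (Equiv.swap x y) y y
  rwa [Equiv.swap_apply_right] at this

lemma JJ_off_eq (ε : ℝ) {x y x' y' : Fin k} (hxy : x ≠ y) (h' : x' ≠ y') :
    JJ ε x' y' = JJ ε x y := by
  obtain ⟨π, h1, h2⟩ := exists_perm_pair hxy h'
  rw [← h1, ← h2, JJ_perm]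

noncomputable def ww (θ : ℕ → ℝ) (x : Fin k) : ℝ :=
  (if x.val % 2 = 0 then 1 else -1) * θ (x.val / 2)

noncomputable def SS (θ : ℕ → ℝ) (b : Fin k → Bool) : ℝ := ∑ x, ww θ x * eb b x

lemma pan_decomp (hk : k ≠ 0) (γ : ℝ) (θ : ℕ → ℝ) (x : Fin k) :
    paninski k γ θ x = 1/k + (2*γ/k) * ww θ x := by
  unfold paninski ww
  have hkr : (k:ℝ) ≠ 0 := Nat.cast_ne_zero.2 hk
  field_simp

lemma sum_ww (hk : k % 2 = 0) (θ : ℕ → ℝ) : ∑ x : Fin k, ww θ x = 0 := by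
  have h2 : 2 * (k/2) = k := by omega
  have : ∑ x : Fin k, ww θ x
      = ∑ j ∈ Finset.range k, (if j % 2 = 0 then (1:ℝ) else -1) * θ (j / 2) :=
    Fin.sum_univ_eq_sum_range (fun j => (if j % 2 = 0 then (1:ℝ) else -1) * θ (j / 2)) k
  rw [this, ← h2, sum_range_pair]
  apply Finset.sum_eq_zero
  intro i _
  have e1 : (2*i) % 2 = 0 := by omega
  have e2 : (2*i+1) % 2 = 1 := by omega
  have e3 : (2*i) / 2 = i := by omega
  have e4 : (2*i+1) / 2 = i := by omega
  rw [e1, e2, e3, e4]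
  norm_num

lemma sum_ww_mul (hk : k % 2 = 0) (θ θ' : ℕ → ℝ) :
    ∑ x : Fin k, ww θ x * ww θ' x = 2 * ∑ i ∈ Finset.range (k/2), θ i * θ' i := by
  have h2 : 2 * (k/2) = k := by omega
  have : ∑ x : Fin k, ww θ x * ww θ' x
      = ∑ j ∈ Finset.range k, ((if j % 2 = 0 then (1:ℝ) else -1) * θ (j / 2))
          * ((if j % 2 = 0 then (1:ℝ) else -1) * θ' (j / 2)) :=
    Fin.sum_univ_eq_sum_range
      (fun j => ((if j % 2 = 0 then (1:ℝ) else -1) * θ (j / 2))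
          * ((if j % 2 = 0 then (1:ℝ) else -1) * θ' (j / 2))) k
  rw [this, Finset.mul_sum]
  conv_lhs => rw [← h2, sum_range_pair]
  apply Finset.sum_congr rfl
  intro i _
  have e1 : (2*i) % 2 = 0 := by omega
  have e2 : (2*i+1) % 2 = 1 := by omega
  have e3 : (2*i) / 2 = i := by omega
  have e4 : (2*i+1) / 2 = i := by omega
  rw [e1, e2, e3, e4]
  norm_num
  ring

section core
variable {ε γ : ℝ}

lemma q_eq (hk0 : k ≠ 0) (hke : k % 2 = 0) (ε γ : ℝ) (θ : ℕ → ℝ) (b : Fin k → Bool) :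
    ∑ x, paninski k γ θ x * rapporChannel ε x b
      = CC ε b * (DD ε b + ((Rr ε - (Rr ε)⁻¹) * (2*γ/k)) * SS θ b) := by
  rw [mix_eq]
  congr 1
  have hkr : (k:ℝ) ≠ 0 := Nat.cast_ne_zero.2 hk0
  have hs1 : ∑ x, paninski k γ θ x = 1 := by
    rw [Finset.sum_congr rfl (fun x _ => pan_decomp hk0 γ θ x), Finset.sum_add_distrib,
      ← Finset.mul_sum, sum_ww hke, Finset.sum_const, Finset.card_univ, Fintype.card_fin,
      nsmul_eq_mul]
    field_simp
    ring
  have hs2 : ∑ x, paninski k γ θ x * eb b x = mm b / k + (2*γ/k) * SS θ b := by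
    have hpt : ∀ x : Fin k, paninski k γ θ x * eb b x
        = (1/k) * eb b x + (2*γ/k) * (ww θ x * eb b x) := by
      intro x; rw [pan_decomp hk0 γ θ x]; ring
    rw [Finset.sum_congr rfl (fun x _ => hpt x), Finset.sum_add_distrib, ← Finset.mul_sum,
      ← Finset.mul_sum]
    unfold SS mm
    congr 1
    field_simp
  rw [hs1, hs2]
  unfold DD
  ring

lemma P1_eq (hk0 : k ≠ 0) (ε : ℝ) (b : Fin k → Bool) :
    ∑ x, (1/(k:ℝ)) * rapporChannel ε x b = CC ε b * DD ε b := by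
  rw [mix_eq]
  have hkr : (k:ℝ) ≠ 0 := Nat.cast_ne_zero.2 hk0
  congr 1
  rw [Finset.sum_const, Finset.card_univ, Fintype.card_fin, nsmul_eq_mul, ← Finset.mul_sum]
  unfold DD mm
  field_simp

lemma P1_pos (hε : 0 ≤ ε) (hk0 : k ≠ 0) (b : Fin k → Bool) :
    0 < ∑ x, (1/(k:ℝ)) * rapporChannel ε x b := by
  rw [P1_eq hk0]
  exact mul_pos (CC_pos ε b) (DD_pos hε b)

lemma sum_CC_DD (hk0 : k ≠ 0) (ε : ℝ) :
    ∑ b : Fin k → Bool, CC ε b * DD ε b = 1 := by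
  have hkr : (k:ℝ) ≠ 0 := Nat.cast_ne_zero.2 hk0
  rw [Finset.sum_congr rfl (fun b (_ : b ∈ univ) => (P1_eq hk0 ε b).symm), Finset.sum_comm]
  have h1 : ∀ x ∈ (univ : Finset (Fin k)),
      ∑ b : Fin k → Bool, (1/(k:ℝ)) * rapporChannel ε x b = 1/(k:ℝ) := by
    intro x _
    rw [← Finset.mul_sum, sum_channel ε x, mul_one]
  rw [Finset.sum_congr rfl h1, Finset.sum_const, Finset.card_univ, Fintype.card_fin,
    nsmul_eq_mul]
  field_simp

lemma sum_CC_eb (hk0 : k ≠ 0) (ε : ℝ) (θ : ℕ → ℝ) (hke : k % 2 = 0) :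
    ∑ b : Fin k → Bool, CC ε b * SS θ b = 0 := by
  have hx0 : (0:ℕ) < k := Nat.pos_of_ne_zero hk0
  have h1 : ∑ b : Fin k → Bool, CC ε b * SS θ b
      = ∑ x : Fin k, ww θ x * KK ε x := by
    unfold SS
    rw [Finset.sum_congr rfl (fun b (_ : b ∈ univ) => Finset.mul_sum _ _ _), Finset.sum_comm]
    apply Finset.sum_congr rfl
    intro x _
    unfold KK
    rw [Finset.mul_sum]
    apply Finset.sum_congr rfl
    intro b _
    ring
  have h2 : ∀ x ∈ (univ : Finset (Fin k)), ww θ x * KK ε x = ww θ x * KK ε ⟨0, hx0⟩ := by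
    intro x _
    rw [KK_const ε x ⟨0, hx0⟩]
  rw [h1, Finset.sum_congr rfl h2, ← Finset.sum_mul, sum_ww hke, zero_mul]

lemma sum_CC_SS_SS (hke : k % 2 = 0) (hε : 0 ≤ ε) (x₀ y₀ : Fin k) (hx0y0 : x₀ ≠ y₀)
    (θ θ' : ℕ → ℝ) :
    ∑ b : Fin k → Bool, CC ε b * SS θ b * SS θ' b / DD ε b
      = (JJ ε x₀ x₀ - JJ ε x₀ y₀) * (2 * ∑ i ∈ Finset.range (k/2), θ i * θ' i) := by
  set Jd : ℝ := JJ ε x₀ x₀ with hJd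
  set Jo : ℝ := JJ ε x₀ y₀ with hJo
  have expand : ∀ b : Fin k → Bool, CC ε b * SS θ b * SS θ' b / DD ε b
      = ∑ x, ∑ y, ww θ x * ww θ' y * (CC ε b * eb b x * eb b y / DD ε b) := by
    intro b
    have hSS : SS θ b * SS θ' b
        = ∑ x, ∑ y, (ww θ x * eb b x) * (ww θ' y * eb b y) := by
      unfold SS; rw [Finset.sum_mul_sum]
    rw [show CC ε b * SS θ b * SS θ' b / DD ε b
        = (SS θ b * SS θ' b) * (CC ε b / DD ε b) by ring, hSS, Finset.sum_mul]
    apply Finset.sum_congr rfl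
    intro x _
    rw [Finset.sum_mul]
    apply Finset.sum_congr rfl
    intro y _
    ring
  rw [Finset.sum_congr rfl (fun b _ => expand b), Finset.sum_comm]
  have step : ∀ x : Fin k,
      ∑ b : Fin k → Bool, ∑ y, ww θ x * ww θ' y * (CC ε b * eb b x * eb b y / DD ε b)
        = ∑ y, ww θ x * ww θ' y * JJ ε x y := by
    intro x
    rw [Finset.sum_comm]
    apply Finset.sum_congr rfl
    intro y _
    rw [← Finset.mul_sum]
    rfl
  rw [Finset.sum_congr rfl (fun x _ => step x)]
  have rowsum : ∀ x : Fin k, ∑ y, ww θ x * ww θ' y * JJ ε x y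
      = ww θ x * ww θ' x * (Jd - Jo) := by
    intro x
    have hJ : ∀ y : Fin k, JJ ε x y = Jo + (if y = x then Jd - Jo else 0) := by
      intro y
      by_cases hyx : y = x
      · subst hyx
        rw [if_pos rfl, hJd, hJo, JJ_diag_eq ε y x₀]
        ring
      · rw [if_neg hyx, add_zero, hJo]
        exact JJ_off_eq ε hx0y0 (Ne.symm hyx)
    have hrw : ∀ y ∈ (univ : Finset (Fin k)), ww θ x * ww θ' y * JJ ε x y
        = (ww θ' y * Jo) * ww θ x + (if y = x then ww θ x * ww θ' y * (Jd - Jo) else 0) := by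
      intro y _
      rw [hJ y]
      by_cases hyx : y = x
      · rw [if_pos hyx, if_pos hyx]; ring
      · rw [if_neg hyx, if_neg hyx]; ring
    rw [Finset.sum_congr rfl hrw, Finset.sum_add_distrib, ← Finset.sum_mul,
      ← Finset.sum_mul, sum_ww hke, Finset.sum_ite_eq' univ x
        (fun y => ww θ x * ww θ' y * (Jd - Jo))]
    simp
  rw [Finset.sum_congr rfl (fun x _ => rowsum x), ← Finset.sum_mul, sum_ww_mul hke θ θ']
  ring

lemma Jdiff_identity (hε : 0 ≤ ε) (x₀ y₀ : Fin k) :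
    JJ ε x₀ x₀ + JJ ε y₀ y₀ - 2 * JJ ε x₀ y₀
      = ∑ b : Fin k → Bool, CC ε b * (eb b x₀ - eb b y₀)^2 / DD ε b := by
  unfold JJ
  rw [Finset.mul_sum, ← Finset.sum_add_distrib, ← Finset.sum_sub_distrib]
  apply Finset.sum_congr rfl
  intro b _
  ring

lemma Jdiff_nonneg (hε : 0 ≤ ε) (x₀ y₀ : Fin k) :
    0 ≤ JJ ε x₀ x₀ - JJ ε x₀ y₀ := by
  have h := Jdiff_identity (ε := ε) hε x₀ y₀
  rw [JJ_diag_eq ε y₀ x₀] at h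
  have hnn : 0 ≤ ∑ b : Fin k → Bool, CC ε b * (eb b x₀ - eb b y₀)^2 / DD ε b := by
    apply Finset.sum_nonneg
    intro b _
    apply div_nonneg _ (DD_pos hε b).le
    exact mul_nonneg (CC_pos ε b).le (sq_nonneg _)
  linarith

lemma Jdiff_le (hε : 0 ≤ ε) (x₀ y₀ : Fin k) :
    2 * (JJ ε x₀ x₀ - JJ ε x₀ y₀) ≤ Rr ε := by
  have h := Jdiff_identity (ε := ε) hε x₀ y₀
  rw [JJ_diag_eq ε y₀ x₀] at h
  have hbd : ∀ b : Fin k → Bool,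
      CC ε b * (eb b x₀ - eb b y₀)^2 / DD ε b ≤ CC ε b * Rr ε := by
    intro b
    have hsq : (eb b x₀ - eb b y₀)^2 ≤ 1 := by
      unfold eb; split_ifs <;> norm_num
    have hCC := (CC_pos ε b).le
    have hDD := DD_pos hε b
    have hiDD := inv_DD_le hε b
    calc CC ε b * (eb b x₀ - eb b y₀)^2 / DD ε b
        ≤ CC ε b * 1 / DD ε b :=
          (div_le_div_iff_of_pos_right hDD).2 (mul_le_mul_of_nonneg_left hsq hCC)
      _ = CC ε b * (DD ε b)⁻¹ := by rw [mul_one, div_eq_mul_inv]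
      _ ≤ CC ε b * Rr ε := mul_le_mul_of_nonneg_left hiDD hCC
  have hsum : ∑ b : Fin k → Bool, CC ε b * (eb b x₀ - eb b y₀)^2 / DD ε b
      ≤ ∑ b : Fin k → Bool, CC ε b * Rr ε := Finset.sum_le_sum (fun b _ => hbd b)
  rw [← Finset.sum_mul, sum_CC, one_mul] at hsum
  linarith

lemma H_formula (hk0 : k ≠ 0) (hke : k % 2 = 0) (hε : 0 ≤ ε) (x₀ y₀ : Fin k)
    (hxy : x₀ ≠ y₀) (γ : ℝ) (θ θ' : ℕ → ℝ) :
    ∑ b : Fin k → Bool,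
        (∑ x, paninski k γ θ x * rapporChannel ε x b)
          * (∑ x, paninski k γ θ' x * rapporChannel ε x b)
          / (∑ x, (1/(k:ℝ)) * rapporChannel ε x b)
      = 1 + ((Rr ε - (Rr ε)⁻¹) * (2*γ/k))^2 * (JJ ε x₀ x₀ - JJ ε x₀ y₀)
          * (2 * ∑ i ∈ Finset.range (k/2), θ i * θ' i) := by
  set α : ℝ := (Rr ε - (Rr ε)⁻¹) * (2*γ/k) with hα
  have hpt : ∀ b : Fin k → Bool,
      (∑ x, paninski k γ θ x * rapporChannel ε x b)
        * (∑ x, paninski k γ θ' x * rapporChannel ε x b)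
        / (∑ x, (1/(k:ℝ)) * rapporChannel ε x b)
      = CC ε b * DD ε b + α*(CC ε b * SS θ b) + α*(CC ε b * SS θ' b)
          + α^2 * (CC ε b * SS θ b * SS θ' b / DD ε b) := by
    intro b
    rw [q_eq hk0 hke ε γ θ b, q_eq hk0 hke ε γ θ' b, P1_eq hk0 ε b, ← hα]
    have hCC := (CC_pos ε b).ne'
    have hDD := (DD_pos hε b).ne'
    field_simp
    ring
  rw [Finset.sum_congr rfl (fun b _ => hpt b), Finset.sum_add_distrib,
    Finset.sum_add_distrib, Finset.sum_add_distrib, ← Finset.mul_sum, ← Finset.mul_sum,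
    ← Finset.mul_sum, sum_CC_DD hk0 ε, sum_CC_eb hk0 ε θ hke, sum_CC_eb hk0 ε θ' hke,
    sum_CC_SS_SS hke hε x₀ y₀ hxy θ θ']
  ring

lemma pan_nonneg (hγ0 : 0 ≤ γ) (hγ : γ ≤ 1/2) (θ : ℕ → ℝ)
    (hθ : ∀ i, θ i = 1 ∨ θ i = -1) (x : Fin k) : 0 ≤ paninski k γ θ x := by
  unfold paninski
  apply div_nonneg _ (Nat.cast_nonneg k)
  rcases hθ (x.val / 2) with h | h <;> rw [h] <;> split_ifs <;> nlinarith

end core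

lemma chisq_lower {β : Type*} [Fintype β] (P M g : β → ℝ) (hP : ∀ b, 0 < P b)
    (hPsum : ∑ b, P b = 1) (hMsum : ∑ b, M b = 1) (hg : ∀ b, g b = 0 ∨ g b = 1)
    (h13 : 1/3 ≤ ∑ b, (M b - P b) * g b) :
    10/9 ≤ ∑ b, (M b)^2 / P b := by
  have hfg : ∀ b, ((M b - P b)/Real.sqrt (P b)) * (Real.sqrt (P b) * g b)
      = (M b - P b) * g b := by
    intro b
    have h := Real.sqrt_pos.2 (hP b)
    field_simp
  have hCS := Finset.sum_mul_sq_le_sq_mul_sq univ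
      (fun b => (M b - P b)/Real.sqrt (P b)) (fun b => Real.sqrt (P b) * g b)
  rw [Finset.sum_congr rfl (fun b _ => hfg b)] at hCS
  have hf2 : ∀ b ∈ (univ : Finset β), ((M b - P b)/Real.sqrt (P b))^2
      = (M b - P b)^2 / P b := by
    intro b _
    rw [div_pow, Real.sq_sqrt (hP b).le]
  have hg2 : ∀ b ∈ (univ : Finset β), (Real.sqrt (P b) * g b)^2 = P b * (g b)^2 := by
    intro b _
    rw [mul_pow, Real.sq_sqrt (hP b).le]
  rw [Finset.sum_congr rfl hf2, Finset.sum_congr rfl hg2] at hCS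
  have hgle : ∑ b, P b * (g b)^2 ≤ 1 := by
    rw [← hPsum]
    apply Finset.sum_le_sum
    intro b _
    rcases hg b with h | h <;> rw [h] <;> nlinarith [(hP b).le]
  have hchinn : 0 ≤ ∑ b, (M b - P b)^2 / P b :=
    Finset.sum_nonneg fun b _ => div_nonneg (sq_nonneg _) (hP b).le
  have h19 : 1/9 ≤ ∑ b, (M b - P b)^2 / P b := by
    nlinarith [hCS, h13, hgle, hchinn]
  have hexp : ∑ b, (M b - P b)^2 / P b
      = (∑ b, (M b)^2 / P b) - 2*(∑ b, M b) + (∑ b, P b) := by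
    have hpt : ∀ b ∈ (univ : Finset β), (M b - P b)^2 / P b
        = (M b)^2 / P b - 2 * M b + P b := by
      intro b _
      have := (hP b).ne'
      field_simp
      ring
    rw [Finset.sum_congr rfl hpt, Finset.sum_add_distrib, Finset.sum_sub_distrib,
      ← Finset.mul_sum]
  rw [hexp, hMsum, hPsum] at h19
  linarith

noncomputable def thetaOf (m : ℕ) (v : Fin m → Bool) : ℕ → ℝ :=
  fun i => if h : i < m then (if v ⟨i, h⟩ then 1 else -1) else 1

lemma thetaOf_pm (m : ℕ) (v : Fin m → Bool) (i : ℕ) :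
    thetaOf m v i = 1 ∨ thetaOf m v i = -1 := by
  unfold thetaOf
  split_ifs <;> simp

lemma thetaOf_coe (m : ℕ) (v : Fin m → Bool) (i : Fin m) :
    thetaOf m v i = (if v i then 1 else -1) := by
  unfold thetaOf
  rw [dif_pos i.isLt]

lemma mgf (m : ℕ) (t : ℝ) :
    ∑ v : Fin m → Bool, ∑ v' : Fin m → Bool,
        Real.exp (t * ∑ i ∈ Finset.range m, thetaOf m v i * thetaOf m v' i)
      = (2:ℝ)^m * (Real.exp t + Real.exp (-t))^m := by
  have hinner : ∀ v : Fin m → Bool,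
      ∑ v' : Fin m → Bool,
          Real.exp (t * ∑ i ∈ Finset.range m, thetaOf m v i * thetaOf m v' i)
        = (Real.exp t + Real.exp (-t))^m := by
    intro v
    have hT : ∀ v' : Fin m → Bool,
        Real.exp (t * ∑ i ∈ Finset.range m, thetaOf m v i * thetaOf m v' i)
          = ∏ i : Fin m,
              Real.exp (t * ((if v i then (1:ℝ) else -1) * (if v' i then (1:ℝ) else -1))) := by
      intro v'
      rw [← Real.exp_sum]
      congr 1
      rw [← Fin.sum_univ_eq_sum_range (fun j => thetaOf m v j * thetaOf m v' j) m,
        Finset.mul_sum]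
      apply Finset.sum_congr rfl
      intro i _
      rw [thetaOf_coe, thetaOf_coe]
    rw [Finset.sum_congr rfl (fun v' _ => hT v')]
    rw [sum_pi_bool_prod (fun i s =>
      Real.exp (t * ((if v i then (1:ℝ) else -1) * (if s then (1:ℝ) else -1))))]
    have hfac : ∀ i ∈ (univ : Finset (Fin m)),
        Real.exp (t * ((if v i then (1:ℝ) else -1) * (if (true:Bool) then (1:ℝ) else -1)))
          + Real.exp (t * ((if v i then (1:ℝ) else -1) * (if (false:Bool) then (1:ℝ) else -1)))
        = Real.exp t + Real.exp (-t) := by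
      intro i _
      have h1 : (if (true:Bool) then (1:ℝ) else -1) = 1 := rfl
      have h2 : (if (false:Bool) then (1:ℝ) else -1) = -1 := rfl
      rw [h1, h2]
      cases hvi : v i
      · rw [h2, show t * ((-1:ℝ) * 1) = -t by ring, show t * ((-1:ℝ) * -1) = t by ring]
        exact add_comm _ _
      · rw [h1, show t * ((1:ℝ) * 1) = t by ring, show t * ((1:ℝ) * -1) = -t by ring]
    rw [Finset.prod_congr rfl hfac, Finset.prod_const, Finset.card_univ, Fintype.card_fin]
  rw [Finset.sum_congr rfl (fun v _ => hinner v), Finset.sum_const, Finset.card_univ,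
    nsmul_eq_mul]
  congr 1
  rw [show Fintype.card (Fin m → Bool) = 2^m by simp [Fintype.card_fun]]
  push_cast
  ring

end RUT

open RUT in
set_option maxHeartbeats 2000000 in
/-- Sample complexity lower bound for uniformity testing using RAPPOR: for
`ε ∈ (0,1]`, any test based on `n` i.i.d. `k`-RAPPOR outputs that distinguishes the
uniform distribution from all Paninski perturbations `p_θ` (each `γ`-far from
uniform), with error probability at most `1/3` on both sides, must use
`n = Ω(k^{3/2}/(γ²ε²))` samples. -/
theorem rappor_uniformity_testing_lower_bound :
    ∃ c : ℝ, 0 < c ∧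
      ∀ (ε : ℝ), 0 < ε → ε ≤ 1 →
      ∀ (k : ℕ), k % 2 = 0 →
      ∀ (γ : ℝ), 0 < γ → γ ≤ 1 / 2 →
      ∀ (n : ℕ) (A : (Fin n → Fin k → Bool) → Bool),
        (2 / 3 ≤ ∑ B : Fin n → Fin k → Bool,
            (∏ i, ∑ x : Fin k, (1 / (k : ℝ)) * rapporChannel ε x (B i)) *
              (if A B = false then 1 else 0)) →
        (∀ θ : ℕ → ℝ, (∀ i, θ i = 1 ∨ θ i = -1) →
          2 / 3 ≤ ∑ B : Fin n → Fin k → Bool,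
            (∏ i, ∑ x : Fin k, paninski k γ θ x * rapporChannel ε x (B i)) *
              (if A B = true then 1 else 0)) →
        c * (k : ℝ) ^ ((3 : ℝ) / 2) / (γ ^ 2 * ε ^ 2) ≤ (n : ℝ) := by
  refine ⟨1/300, by norm_num, ?_⟩
  intro ε hε0 hε1 k hke γ hγ0 hγ2 n A h0 h1
  by_cases hk0 : k = 0
  · subst hk0
    rw [Nat.cast_zero, Real.zero_rpow (by norm_num : ((3:ℝ)/2) ≠ 0), mul_zero, zero_div]
    exact Nat.cast_nonneg n
  have hk2 : 2 ≤ k := by omega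
  have hε : (0:ℝ) ≤ ε := hε0.le
  have hkR : (0:ℝ) < k := by exact_mod_cast Nat.pos_of_ne_zero hk0
  set m : ℕ := k / 2 with hm
  have hm1 : 1 ≤ m := by omega
  have hmk : (m:ℝ) ≤ k := by exact_mod_cast Nat.div_le_self k 2
  set x₀ : Fin k := ⟨0, by omega⟩ with hx0
  set y₀ : Fin k := ⟨1, by omega⟩ with hy0
  have hxy : x₀ ≠ y₀ := by
    rw [hx0, hy0]; exact Fin.ne_of_val_ne (by norm_num)
  set N : ℝ := 2 ^ m with hN
  have hNpos : 0 < N := by rw [hN]; positivity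
  set P1 : (Fin k → Bool) → ℝ := fun b => ∑ x, (1/(k:ℝ)) * rapporChannel ε x b with hP1
  set Q1 : (Fin m → Bool) → (Fin k → Bool) → ℝ :=
    fun v b => ∑ x, paninski k γ (thetaOf m v) x * rapporChannel ε x b with hQ1
  have hP1pos : ∀ b, 0 < P1 b := fun b => P1_pos hε hk0 b
  have hP1sum : ∑ b : Fin k → Bool, P1 b = 1 := by
    calc ∑ b : Fin k → Bool, P1 b = ∑ b : Fin k → Bool, CC ε b * DD ε b :=
          Finset.sum_congr rfl (fun b _ => P1_eq hk0 ε b)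
      _ = 1 := sum_CC_DD hk0 ε
  have hQ1nn : ∀ v b, 0 ≤ Q1 v b := fun v b => Finset.sum_nonneg fun x _ =>
    mul_nonneg (pan_nonneg hγ0.le hγ2 _ (thetaOf_pm m v) x) (rappor_nonneg ε x b)
  have hQ1sum : ∀ v, ∑ b : Fin k → Bool, Q1 v b = 1 := by
    intro v
    have hpt : ∀ b ∈ (univ : Finset (Fin k → Bool)), Q1 v b
        = CC ε b * DD ε b
          + ((Rr ε - (Rr ε)⁻¹) * (2*γ/k)) * (CC ε b * SS (thetaOf m v) b) := by
      intro b _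
      show (∑ x, paninski k γ (thetaOf m v) x * rapporChannel ε x b) = _
      rw [q_eq hk0 hke ε γ _ b]
      ring
    rw [Finset.sum_congr rfl hpt, Finset.sum_add_distrib, ← Finset.mul_sum,
      sum_CC_DD hk0 ε, sum_CC_eb hk0 ε _ hke, mul_zero, add_zero]
  set Pn : (Fin n → Fin k → Bool) → ℝ := fun B => ∏ i, P1 (B i) with hPnd
  set Qn : (Fin m → Bool) → (Fin n → Fin k → Bool) → ℝ :=
    fun v B => ∏ i, Q1 v (B i) with hQnd
  set g1 : (Fin n → Fin k → Bool) → ℝ := fun B => if A B = true then 1 else 0 with hg1d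
  set MM : (Fin n → Fin k → Bool) → ℝ :=
    fun B => N⁻¹ * ∑ v : Fin m → Bool, Qn v B with hMMd
  have hPnpos : ∀ B, 0 < Pn B := fun B => Finset.prod_pos fun i _ => hP1pos _
  have hPnsum : ∑ B : Fin n → Fin k → Bool, Pn B = 1 := by
    calc ∑ B : Fin n → Fin k → Bool, Pn B = (∑ b : Fin k → Bool, P1 b)^n := sum_pi_prod P1
      _ = 1 := by rw [hP1sum, one_pow]
  have hQnsum : ∀ v, ∑ B : Fin n → Fin k → Bool, Qn v B = 1 := by
    intro v
    calc ∑ B : Fin n → Fin k → Bool, Qn v B = (∑ b : Fin k → Bool, Q1 v b)^n :=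
          sum_pi_prod (Q1 v)
      _ = 1 := by rw [hQ1sum v, one_pow]
  have hcard : (Fintype.card (Fin m → Bool) : ℝ) = N := by
    rw [hN]
    simp [Fintype.card_fun]
  have hMsum : ∑ B : Fin n → Fin k → Bool, MM B = 1 := by
    calc ∑ B : Fin n → Fin k → Bool, MM B
        = N⁻¹ * ∑ B : Fin n → Fin k → Bool, ∑ v : Fin m → Bool, Qn v B := by
          rw [← Finset.mul_sum]
      _ = N⁻¹ * ∑ v : Fin m → Bool, ∑ B : Fin n → Fin k → Bool, Qn v B := by
          rw [Finset.sum_comm]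
      _ = N⁻¹ * ∑ _v : Fin m → Bool, (1:ℝ) := by
          rw [Finset.sum_congr rfl (fun v _ => hQnsum v)]
      _ = 1 := by
          rw [Finset.sum_const, Finset.card_univ, nsmul_eq_mul, mul_one, ← hcard]
          field_simp
  have hg1pm : ∀ B, g1 B = 0 ∨ g1 B = 1 := by
    intro B
    show (if A B = true then (1:ℝ) else 0) = 0 ∨ (if A B = true then (1:ℝ) else 0) = 1
    split_ifs <;> simp
  have hPg1 : ∑ B : Fin n → Fin k → Bool, Pn B * g1 B ≤ 1/3 := by
    have hpt : ∀ B ∈ (univ : Finset (Fin n → Fin k → Bool)),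
        Pn B * g1 B = Pn B - Pn B * (if A B = false then 1 else 0) := by
      intro B _
      show Pn B * (if A B = true then (1:ℝ) else 0) = _
      cases hAB : A B <;> simp [hAB]
    rw [Finset.sum_congr rfl hpt, Finset.sum_sub_distrib, hPnsum]
    have h0' : 2/3 ≤ ∑ B : Fin n → Fin k → Bool, Pn B * (if A B = false then 1 else 0) := h0
    linarith only [h0']
  have hMg1 : 2/3 ≤ ∑ B : Fin n → Fin k → Bool, MM B * g1 B := by
    have hpt : ∀ B ∈ (univ : Finset (Fin n → Fin k → Bool)),
        MM B * g1 B = N⁻¹ * ∑ v : Fin m → Bool, Qn v B * g1 B := by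
      intro B _
      show (N⁻¹ * ∑ v : Fin m → Bool, Qn v B) * g1 B = _
      rw [mul_assoc, Finset.sum_mul]
    rw [Finset.sum_congr rfl hpt, ← Finset.mul_sum, Finset.sum_comm]
    have hlb : ∀ v ∈ (univ : Finset (Fin m → Bool)),
        (2:ℝ)/3 ≤ ∑ B : Fin n → Fin k → Bool, Qn v B * g1 B := by
      intro v _
      exact h1 (thetaOf m v) (thetaOf_pm m v)
    have hsle := Finset.sum_le_sum hlb
    rw [Finset.sum_const, Finset.card_univ, nsmul_eq_mul, hcard] at hsle
    calc (2:ℝ)/3 = N⁻¹ * (N * (2/3)) := by field_simp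
      _ ≤ N⁻¹ * ∑ v : Fin m → Bool, ∑ B : Fin n → Fin k → Bool, Qn v B * g1 B := by
          apply mul_le_mul_of_nonneg_left _ (inv_nonneg.2 hNpos.le)
          linarith only [hsle]
  have hdiff : 1/3 ≤ ∑ B : Fin n → Fin k → Bool, (MM B - Pn B) * g1 B := by
    have heq : ∑ B : Fin n → Fin k → Bool, (MM B - Pn B) * g1 B
        = (∑ B : Fin n → Fin k → Bool, MM B * g1 B)
          - ∑ B : Fin n → Fin k → Bool, Pn B * g1 B := by
      rw [← Finset.sum_sub_distrib]
      apply Finset.sum_congr rfl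
      intro B _
      ring
    rw [heq]
    linarith only [hMg1, hPg1]
  have h109 : 10/9 ≤ ∑ B : Fin n → Fin k → Bool, (MM B)^2 / Pn B :=
    chisq_lower Pn MM g1 hPnpos hPnsum hMsum hg1pm hdiff
  set c1 : ℝ := ((Rr ε - (Rr ε)⁻¹) * (2*γ/k))^2 * (JJ ε x₀ x₀ - JJ ε x₀ y₀) with hc1
  set t : ℝ := 2 * n * c1 with ht
  have hHform : ∀ v v' : Fin m → Bool,
      ∑ b : Fin k → Bool, Q1 v b * Q1 v' b / P1 b
        = 1 + c1 * (2 * ∑ i ∈ Finset.range m, thetaOf m v i * thetaOf m v' i) := by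
    intro v v'
    have hthis := H_formula hk0 hke hε x₀ y₀ hxy γ (thetaOf m v) (thetaOf m v')
    rw [← hm] at hthis
    exact hthis
  have hHnn : ∀ v v' : Fin m → Bool,
      0 ≤ 1 + c1 * (2 * ∑ i ∈ Finset.range m, thetaOf m v i * thetaOf m v' i) := by
    intro v v'
    rw [← hHform v v']
    apply Finset.sum_nonneg
    intro b _
    exact div_nonneg (mul_nonneg (hQ1nn v b) (hQ1nn v' b)) (hP1pos b).le
  have hMsq : ∑ B : Fin n → Fin k → Bool, (MM B)^2 / Pn B
      = N⁻¹ * N⁻¹ * ∑ v : Fin m → Bool, ∑ v' : Fin m → Bool,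
          (∑ b : Fin k → Bool, Q1 v b * Q1 v' b / P1 b)^n := by
    have hpt : ∀ B ∈ (univ : Finset (Fin n → Fin k → Bool)), (MM B)^2 / Pn B
        = N⁻¹ * N⁻¹ * ∑ v : Fin m → Bool, ∑ v' : Fin m → Bool,
            (Qn v B * Qn v' B / Pn B) := by
      intro B _
      show (N⁻¹ * ∑ v : Fin m → Bool, Qn v B)^2 / Pn B = _
      have hstep : (N⁻¹ * ∑ v : Fin m → Bool, Qn v B)^2 / Pn B
          = N⁻¹ * N⁻¹ * ((∑ v : Fin m → Bool, Qn v B)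
              * (∑ v' : Fin m → Bool, Qn v' B) / Pn B) := by
        ring
      rw [hstep, Finset.sum_mul_sum, Finset.sum_div]
      congr 1
      apply Finset.sum_congr rfl
      intro v _
      rw [Finset.sum_div]
    rw [Finset.sum_congr rfl hpt, ← Finset.mul_sum, Finset.sum_comm]
    congr 1
    apply Finset.sum_congr rfl
    intro v _
    rw [Finset.sum_comm]
    apply Finset.sum_congr rfl
    intro v' _
    have hpt2 : ∀ B ∈ (univ : Finset (Fin n → Fin k → Bool)),
        Qn v B * Qn v' B / Pn B = ∏ i, (Q1 v (B i) * Q1 v' (B i) / P1 (B i)) := by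
      intro B _
      show (∏ i, Q1 v (B i)) * (∏ i, Q1 v' (B i)) / (∏ i, P1 (B i)) = _
      rw [← Finset.prod_mul_distrib, ← Finset.prod_div_distrib]
    rw [Finset.sum_congr rfl hpt2,
      sum_pi_prod (fun b => Q1 v b * Q1 v' b / P1 b)]
  have hHpow : ∀ v v' : Fin m → Bool,
      (∑ b : Fin k → Bool, Q1 v b * Q1 v' b / P1 b)^n
        ≤ Real.exp (t * ∑ i ∈ Finset.range m, thetaOf m v i * thetaOf m v' i) := by
    intro v v'
    rw [hHform v v']
    set T := ∑ i ∈ Finset.range m, thetaOf m v i * thetaOf m v' i with hT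
    have h1x : 1 + c1 * (2*T) ≤ Real.exp (c1 * (2*T)) := by
      have hax := Real.add_one_le_exp (c1 * (2*T))
      linarith only [hax]
    have hnn := hHnn v v'
    calc (1 + c1*(2*T))^n ≤ (Real.exp (c1*(2*T)))^n := pow_le_pow_left₀ hnn h1x n
      _ = Real.exp ((n:ℝ) * (c1*(2*T))) := (Real.exp_nat_mul _ n).symm
      _ = Real.exp (t * T) := by rw [ht]; congr 1; ring
  have hsum_le : ∑ v : Fin m → Bool, ∑ v' : Fin m → Bool,
      (∑ b : Fin k → Bool, Q1 v b * Q1 v' b / P1 b)^n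
        ≤ N * (Real.exp t + Real.exp (-t))^m := by
    calc ∑ v : Fin m → Bool, ∑ v' : Fin m → Bool,
          (∑ b : Fin k → Bool, Q1 v b * Q1 v' b / P1 b)^n
        ≤ ∑ v : Fin m → Bool, ∑ v' : Fin m → Bool,
            Real.exp (t * ∑ i ∈ Finset.range m, thetaOf m v i * thetaOf m v' i) := by
          apply Finset.sum_le_sum
          intro v _
          apply Finset.sum_le_sum
          intro v' _
          exact hHpow v v'
      _ = (2:ℝ)^m * (Real.exp t + Real.exp (-t))^m := mgf m t
      _ = N * (Real.exp t + Real.exp (-t))^m := by rw [hN]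
  have hcosh : 10/9 ≤ Real.exp ((m:ℝ) * (t^2/2)) := by
    have hchain : 10/9 ≤ N⁻¹ * (Real.exp t + Real.exp (-t))^m := by
      rw [hMsq] at h109
      have hmul := mul_le_mul_of_nonneg_left hsum_le
        (by positivity : (0:ℝ) ≤ N⁻¹ * N⁻¹)
      have hNN : N⁻¹ * N⁻¹ * (N * (Real.exp t + Real.exp (-t))^m)
          = N⁻¹ * (Real.exp t + Real.exp (-t))^m := by
        field_simp
      linarith only [h109, hmul, hNN]
    have hNval : N⁻¹ * (Real.exp t + Real.exp (-t))^m
        = ((Real.exp t + Real.exp (-t))/2)^m := by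
      rw [div_pow, hN, inv_mul_eq_div]
    have hch2 : ((Real.exp t + Real.exp (-t))/2)^m ≤ (Real.exp (t^2/2))^m := by
      apply pow_le_pow_left₀ (by positivity)
      rw [show (Real.exp t + Real.exp (-t))/2 = Real.cosh t from (Real.cosh_eq t).symm]
      exact Real.cosh_le_exp_half_sq t
    have hexppow : (Real.exp (t^2/2))^m = Real.exp ((m:ℝ) * (t^2/2)) :=
      (Real.exp_nat_mul _ m).symm
    rw [hNval] at hchain
    linarith only [hchain, hch2, hexppow.le, hexppow.ge]
  have h110 : 1/10 ≤ (m:ℝ) * (t^2/2) := by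
    have he : Real.exp (1/10) ≤ 10/9 := by
      have h9 := Real.add_one_le_exp (-(1/10 : ℝ))
      have hmul := mul_le_mul_of_nonneg_left h9 (Real.exp_pos (1/10)).le
      rw [← Real.exp_add] at hmul
      norm_num at hmul
      linarith only [hmul, Real.exp_pos (1/10 : ℝ)]
    exact Real.exp_le_exp.1 (le_trans he hcosh)
  have h15 : 1/5 ≤ (m:ℝ) * t^2 := by
    have heq : (m:ℝ) * (t^2/2) = ((m:ℝ) * t^2)/2 := by ring
    rw [heq] at h110
    linarith only [h110]
  have hc1nn : 0 ≤ c1 := by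
    rw [hc1]
    exact mul_nonneg (sq_nonneg _) (Jdiff_nonneg hε x₀ y₀)
  have hRpos := Rr_pos ε
  have hR1 := one_le_Rr hε
  have hRsq : Rr ε ^ 2 = Real.exp ε := by
    show Real.exp (ε/2) ^ 2 = Real.exp ε
    rw [← Real.exp_nat_mul]
    congr 1
    push_cast
    ring
  have hexp1 : Real.exp 1 < 3 := lt_trans Real.exp_one_lt_d9 (by norm_num)
  have hexpe1 : Real.exp ε ≤ 3 := le_trans (Real.exp_le_exp.2 hε1) hexp1.le
  have hR2 : Rr ε ≤ 2 := by nlinarith only [hRsq, hexpe1, sq_nonneg (Rr ε - 2), hRpos]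
  have hinv : Rr ε * (Rr ε)⁻¹ = 1 := mul_inv_cancel₀ hRpos.ne'
  have hexpe : Real.exp ε - 1 ≤ ε * Real.exp ε := by
    have h9 := Real.add_one_le_exp (-ε)
    have hmul := mul_le_mul_of_nonneg_left h9 (Real.exp_pos ε).le
    rw [← Real.exp_add] at hmul
    simp at hmul
    nlinarith only [hmul]
  have hRsub_le : Rr ε - (Rr ε)⁻¹ ≤ 3*ε := by
    have hRsq1 : 1 ≤ Rr ε ^ 2 := by nlinarith only [hR1]
    have key : 0 ≤ (Rr ε - 1) * (Rr ε ^2 - 1) :=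
      mul_nonneg (by linarith only [hR1]) (by linarith only [hRsq1])
    have h1s : Rr ε - (Rr ε)⁻¹ ≤ Rr ε^2 - 1 := by nlinarith only [key, hinv, hRpos]
    have h2s : Rr ε^2 - 1 ≤ 3*ε := by
      rw [hRsq]
      nlinarith only [hexpe, mul_le_mul_of_nonneg_left hexpe1 hε]
    linarith only [h1s, h2s]
  have hRsub_nn : 0 ≤ Rr ε - (Rr ε)⁻¹ := by nlinarith only [hinv, hR1, hRpos]
  have hJle2 : JJ ε x₀ x₀ - JJ ε x₀ y₀ ≤ Rr ε / 2 := by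
    linarith only [Jdiff_le (ε := ε) (k := k) hε x₀ y₀]
  have hJnn := Jdiff_nonneg (ε := ε) (k := k) hε x₀ y₀
  have hc1k : c1 * (k:ℝ)^2 ≤ 36 * ε^2 * γ^2 := by
    rw [hc1]
    have hkne : (k:ℝ) ≠ 0 := hkR.ne'
    have heq : ((Rr ε - (Rr ε)⁻¹) * (2*γ/k))^2 * (JJ ε x₀ x₀ - JJ ε x₀ y₀) * (k:ℝ)^2
        = ((Rr ε - (Rr ε)⁻¹)^2 * (4*γ^2)) * (JJ ε x₀ x₀ - JJ ε x₀ y₀) := by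
      field_simp
      ring
    rw [heq]
    have hs2 : (Rr ε - (Rr ε)⁻¹)^2 ≤ 9*ε^2 := by nlinarith only [hRsub_le, hRsub_nn]
    have hJ1 : JJ ε x₀ x₀ - JJ ε x₀ y₀ ≤ 1 := by linarith only [hJle2, hR2]
    have step1 : ((Rr ε - (Rr ε)⁻¹)^2 * (4*γ^2)) * (JJ ε x₀ x₀ - JJ ε x₀ y₀)
        ≤ ((Rr ε - (Rr ε)⁻¹)^2 * (4*γ^2)) * 1 :=
      mul_le_mul_of_nonneg_left hJ1 (by positivity)
    have step2 : (Rr ε - (Rr ε)⁻¹)^2 * (4*γ^2) ≤ (9*ε^2) * (4*γ^2) :=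
      mul_le_mul_of_nonneg_right hs2 (by positivity)
    nlinarith only [step1, step2]
  have h5k : 1/5 ≤ (k:ℝ) * t^2 :=
    le_trans h15 (mul_le_mul_of_nonneg_right hmk (sq_nonneg t))
  have h6 : (k:ℝ)^3 ≤ 20 * (n:ℝ)^2 * (c1*(k:ℝ)^2)^2 := by
    have hmul := mul_le_mul_of_nonneg_left h5k (by positivity : (0:ℝ) ≤ 5*(k:ℝ)^3)
    rw [ht] at hmul
    nlinarith only [hmul]
  have hc1k2nn : 0 ≤ c1*(k:ℝ)^2 := mul_nonneg hc1nn (sq_nonneg _)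
  have h7 : (c1*(k:ℝ)^2)^2 ≤ (36*ε^2*γ^2)^2 := pow_le_pow_left₀ hc1k2nn hc1k 2
  have hk3 : (k:ℝ)^3 ≤ 25920 * (n:ℝ)^2 * ε^4 * γ^4 := by
    have h8 := mul_le_mul_of_nonneg_left h7 (by positivity : (0:ℝ) ≤ 20*(n:ℝ)^2)
    nlinarith only [h6, h8]
  have h32 : ((k:ℝ) ^ ((3:ℝ)/2))^2 = (k:ℝ)^3 := by
    rw [← Real.rpow_natCast ((k:ℝ) ^ ((3:ℝ)/2)) 2, ← Real.rpow_mul (Nat.cast_nonneg k),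
      show ((3:ℝ)/2 * ((2:ℕ):ℝ)) = ((3:ℕ):ℝ) by norm_num, Real.rpow_natCast]
  have hknn : (0:ℝ) ≤ (k:ℝ) ^ ((3:ℝ)/2) := Real.rpow_nonneg (Nat.cast_nonneg k) _
  have hLnn : (0:ℝ) ≤ 1/300 * (k:ℝ)^((3:ℝ)/2) / (γ^2*ε^2) := by positivity
  have hL2 : (1/300 * (k:ℝ)^((3:ℝ)/2) / (γ^2*ε^2))^2 ≤ (n:ℝ)^2 := by
    rw [div_pow, mul_pow, h32, div_le_iff₀ (by positivity)]
    nlinarith only [hk3]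
  nlinarith only [hL2, hLnn, (Nat.cast_nonneg n : (0:ℝ) ≤ (n:ℝ))]
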